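/- Let G be a connected graph with d*(G) ≥ 3 containing a pendant path u₁u₂u₃v with d(u₁) = 1, d(u₂) = d(u₃) = 2, and d(v) ≥ 3. Let G' = G − {u₁, u₂, u₃}. Then G' is connected, γ₂(G) ≤ γ₂(G') + 2, and a(G) ≥ a(G') + 2; hence γ₂(G') ≤ a(G') + 1 implies γ₂(G) ≤ a(G) + 1. -/

import Mathlib

open Classical Finset
noncomputable section

/-- `S` is a 2-dominating set of `G`: every vertex outside `S` has ≥ 2 neighbors in `S`. -/
def IsTwoDomSet {V : Type*} [Fintype V] (G : SimpleGraph V) (S : Finset V) : Prop :=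
  ∀ v, v ∉ S → 2 ≤ (G.neighborFinset v ∩ S).card

/-- The 2-domination number. -/
noncomputable def gamma2 {V : Type*} [Fintype V] (G : SimpleGraph V) : ℕ :=
  sInf {k | ∃ S : Finset V, IsTwoDomSet G S ∧ S.card = k}

/-- `S` is an annihilation set of `G`: the sum of degrees over `S` is at most `m(G)`. -/
def IsAnnSet {V : Type*} [Fintype V] (G : SimpleGraph V) (S : Finset V) : Prop :=
  ∑ v ∈ S, G.degree v ≤ G.edgeFinset.card

/-- The annihilation number: the largest size of an annihilation set (equivalently, the
largest `k` such that the sum of the `k` smallest degrees is at most the edge count). -/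
noncomputable def annihilation {V : Type*} [Fintype V] (G : SimpleGraph V) : ℕ :=
  sSup {k | ∃ S : Finset V, IsAnnSet G S ∧ S.card = k}

/-- Lemma 3.2(iii): removing a pendant path `u₁u₂u₃` attached at a vertex `v` of degree ≥ 3. -/
theorem stmt6 {V : Type*} [Fintype V] (G : SimpleGraph V) (hconn : G.Connected)
    (hstar : ∀ S : Finset V, IsAnnSet G S → S.card = annihilation G →
        ∀ w ∉ S, 3 ≤ G.degree w)
    (u₁ u₂ u₃ v : V)
    (h12 : u₁ ≠ u₂) (h13 : u₁ ≠ u₃) (h23 : u₂ ≠ u₃)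
    (hv1 : v ≠ u₁) (hv2 : v ≠ u₂) (hv3 : v ≠ u₃)
    (hp1 : G.Adj u₁ u₂) (hp2 : G.Adj u₂ u₃) (hp3 : G.Adj u₃ v)
    (hd1 : G.degree u₁ = 1) (hd2 : G.degree u₂ = 2) (hd3 : G.degree u₃ = 2)
    (hdv : 3 ≤ G.degree v) :
    (G.induce ({u₁, u₂, u₃}ᶜ : Set V)).Connected ∧
    gamma2 G ≤ gamma2 (G.induce ({u₁, u₂, u₃}ᶜ : Set V)) + 2 ∧
    annihilation (G.induce ({u₁, u₂, u₃}ᶜ : Set V)) + 2 ≤ annihilation G ∧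
    (gamma2 (G.induce ({u₁, u₂, u₃}ᶜ : Set V)) ≤
        annihilation (G.induce ({u₁, u₂, u₃}ᶜ : Set V)) + 1 →
      gamma2 G ≤ annihilation G + 1) := by
  set T : Set V := ({u₁, u₂, u₃}ᶜ : Set V) with hTdef
  set G' : SimpleGraph T := G.induce T with hG'def
  have hmemT : ∀ x : V, x ∈ T ↔ x ≠ u₁ ∧ x ≠ u₂ ∧ x ≠ u₃ := by
    intro x
    simp [hTdef, Set.mem_compl_iff, not_or]
  -- neighbor finsets
  have hn1 : G.neighborFinset u₁ = {u₂} := by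
    symm
    apply Finset.eq_of_subset_of_card_le
    · simp [SimpleGraph.mem_neighborFinset, hp1]
    · rw [SimpleGraph.card_neighborFinset_eq_degree, hd1, Finset.card_singleton]
  have hn2 : G.neighborFinset u₂ = {u₁, u₃} := by
    symm
    apply Finset.eq_of_subset_of_card_le
    · intro x hx
      simp only [Finset.mem_insert, Finset.mem_singleton] at hx
      rcases hx with rfl | rfl
      · simp [SimpleGraph.mem_neighborFinset, hp1.symm]
      · simp [SimpleGraph.mem_neighborFinset, hp2]
    · rw [SimpleGraph.card_neighborFinset_eq_degree, hd2, Finset.card_pair h13]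
  have hn3 : G.neighborFinset u₃ = {u₂, v} := by
    symm
    apply Finset.eq_of_subset_of_card_le
    · intro x hx
      simp only [Finset.mem_insert, Finset.mem_singleton] at hx
      rcases hx with rfl | rfl
      · simp [SimpleGraph.mem_neighborFinset, hp2.symm]
      · simp [SimpleGraph.mem_neighborFinset, hp3]
    · rw [SimpleGraph.card_neighborFinset_eq_degree, hd3, Finset.card_pair (Ne.symm hv2)]
  have ha1 : ∀ x, G.Adj u₁ x ↔ x = u₂ := by
    intro x; rw [← SimpleGraph.mem_neighborFinset, hn1, Finset.mem_singleton]
  have ha2 : ∀ x, G.Adj u₂ x ↔ x = u₁ ∨ x = u₃ := by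
    intro x; rw [← SimpleGraph.mem_neighborFinset, hn2]; simp
  have ha3 : ∀ x, G.Adj u₃ x ↔ x = u₂ ∨ x = v := by
    intro x; rw [← SimpleGraph.mem_neighborFinset, hn3]; simp
  have hvT : v ∈ T := (hmemT v).2 ⟨hv1, hv2, hv3⟩
  -- any neighbor (in G) of a vertex of T other than v stays in T
  have hnbrT : ∀ w, w ∈ T → w ≠ v → ∀ x, G.Adj w x → x ∈ T := by
    intro w hw hwv x hx
    obtain ⟨hw1, hw2, hw3⟩ := (hmemT w).1 hw
    rw [hmemT]
    refine ⟨?_, ?_, ?_⟩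
    · rintro rfl; exact hw2 ((ha1 w).1 hx.symm)
    · rintro rfl; rcases (ha2 w).1 hx.symm with rfl | rfl
      · exact hw1 rfl
      · exact hw3 rfl
    · rintro rfl; rcases (ha3 w).1 hx.symm with rfl | rfl
      · exact hw2 rfl
      · exact hwv rfl
  -- degree in the induced graph
  have hdeg' : ∀ a : T, G'.degree a
      = ((G.neighborFinset (a : V)).filter (fun x => x ∈ T)).card := by
    intro a
    rw [← SimpleGraph.card_neighborFinset_eq_degree]
    refine Finset.card_bij (fun b _ => (b : V)) ?_ ?_ ?_
    · intro b hb
      rw [SimpleGraph.mem_neighborFinset] at hb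
      have hadj : G.Adj (a : V) (b : V) := hb
      simp only [Finset.mem_filter, SimpleGraph.mem_neighborFinset]
      exact ⟨hadj, b.2⟩
    · intro b₁ _ b₂ _ h; exact Subtype.ext h
    · intro x hx
      simp only [Finset.mem_filter, SimpleGraph.mem_neighborFinset] at hx
      refine ⟨⟨x, hx.2⟩, ?_, rfl⟩
      rw [SimpleGraph.mem_neighborFinset]
      exact hx.1
  have hdeq : ∀ a : T, (a : V) ≠ v → G'.degree a = G.degree (a : V) := by
    intro a hav
    rw [hdeg' a, Finset.filter_true_of_mem, SimpleGraph.card_neighborFinset_eq_degree]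
    intro x hx
    rw [SimpleGraph.mem_neighborFinset] at hx
    exact hnbrT _ a.2 hav x hx
  have hdveq : G'.degree ⟨v, hvT⟩ + 1 = G.degree v := by
    have hfe : (G.neighborFinset v).filter (fun x => x ∈ T) = (G.neighborFinset v).erase u₃ := by
      ext x
      simp only [Finset.mem_filter, Finset.mem_erase, SimpleGraph.mem_neighborFinset]
      constructor
      · rintro ⟨hx, hxT⟩
        exact ⟨((hmemT x).1 hxT).2.2, hx⟩
      · rintro ⟨hx3, hx⟩
        refine ⟨hx, (hmemT x).2 ⟨?_, ?_, hx3⟩⟩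
        · rintro rfl; exact hv2 ((ha1 v).1 hx.symm)
        · rintro rfl; rcases (ha2 v).1 hx.symm with rfl | rfl
          · exact hv1 rfl
          · exact hv3 rfl
    rw [hdeg', hfe, Finset.card_erase_of_mem (by rw [SimpleGraph.mem_neighborFinset]; exact hp3.symm),
      SimpleGraph.card_neighborFinset_eq_degree]
    omega
  -- edge counts
  have hedge : G.edgeFinset.card = G'.edgeFinset.card + 3 := by
    have h1 : ∑ x : V, G.degree x = 2 * G.edgeFinset.card :=
      SimpleGraph.sum_degrees_eq_twice_card_edges G
    have h2 : ∑ a : T, G'.degree a = 2 * G'.edgeFinset.card :=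
      SimpleGraph.sum_degrees_eq_twice_card_edges G'
    have hsplit : ∑ x ∈ ({u₁, u₂, u₃} : Finset V), G.degree x
        + ∑ x ∈ ({u₁, u₂, u₃} : Finset V)ᶜ, G.degree x = ∑ x : V, G.degree x :=
      Finset.sum_add_sum_compl _ _
    have hs5 : ∑ x ∈ ({u₁, u₂, u₃} : Finset V), G.degree x = 5 := by
      rw [Finset.sum_insert (by simp [h12, h13]), Finset.sum_insert (by simp [h23]),
        Finset.sum_singleton, hd1, hd2, hd3]
      omega
    have hTfin : T.toFinset = ({u₁, u₂, u₃} : Finset V)ᶜ := by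
      ext x
      simp [hmemT x, not_or]
    have hcoe : ∑ x ∈ ({u₁, u₂, u₃} : Finset V)ᶜ, G.degree x
        = ∑ a : T, G.degree (a : V) := by
      rw [← hTfin, ← Finset.sum_set_coe]
    have hsum2 : ∑ a : T, G.degree (a : V)
        = ∑ a : T, (G'.degree a + if a = (⟨v, hvT⟩ : T) then 1 else 0) := by
      apply Finset.sum_congr rfl
      intro a _
      by_cases hav : (a : V) = v
      · have : a = (⟨v, hvT⟩ : T) := Subtype.ext hav
        rw [if_pos this, this, hdveq]
      · rw [if_neg (fun h => hav (congrArg Subtype.val h)), hdeq a hav, add_zero]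
    have hone : ∑ a : T, (if a = (⟨v, hvT⟩ : T) then 1 else 0)
        = 1 := by
      rw [Finset.sum_ite_eq' Finset.univ (⟨v, hvT⟩ : T) (fun _ => 1)]
      simp
    rw [Finset.sum_add_distrib, hone] at hsum2
    omega
  -- connectivity
  have key : ∀ n : ℕ, ∀ w : V, ∀ hw : w ∈ T, G.dist w v ≤ n →
      G'.Reachable ⟨w, hw⟩ ⟨v, hvT⟩ := by
    intro n
    induction n with
    | zero =>
      intro w hw hn
      have : w = v := (hconn.dist_eq_zero_iff).1 (Nat.le_zero.1 hn)
      subst this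
      rfl
    | succ n ih =>
      intro w hw hn
      by_cases hwv : w = v
      · subst hwv; rfl
      · obtain ⟨p, hp⟩ := (hconn w v).exists_walk_length_eq_dist
        have hpos : 0 < G.dist w v := hconn.pos_dist_of_ne hwv
        cases p with
        | nil => exact absurd rfl hwv
        | @cons _ y _ h q =>
          have hy : y ∈ T := by
            rw [hmemT]
            obtain ⟨hw1, hw2, hw3⟩ := (hmemT w).1 hw
            refine ⟨?_, ?_, ?_⟩
            · rintro rfl; exact hw2 ((ha1 w).1 h.symm)
            · rintro rfl; rcases (ha2 w).1 h.symm with rfl | rfl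
              · exact hw1 rfl
              · exact hw3 rfl
            · rintro rfl; rcases (ha3 w).1 h.symm with rfl | rfl
              · exact hw2 rfl
              · exact hwv rfl
          have hql : q.length + 1 = G.dist w v := by
            simpa [SimpleGraph.Walk.length_cons] using hp
          have hdy : G.dist y v ≤ n := by
            have := SimpleGraph.dist_le q
            omega
          have hadj : G'.Adj ⟨w, hw⟩ ⟨y, hy⟩ := h
          exact hadj.reachable.trans (ih y hy hdy)
  have hconn' : G'.Connected := by
    have : Nonempty T := ⟨⟨v, hvT⟩⟩
    refine SimpleGraph.Connected.mk ?_
    intro a b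
    exact (key (G.dist (a : V) v) (a : V) a.2 le_rfl).trans
      (key (G.dist (b : V) v) (b : V) b.2 le_rfl).symm
  -- gamma2 bound
  have hg2 : gamma2 G ≤ gamma2 G' + 2 := by
    have hne : {k | ∃ S : Finset T, IsTwoDomSet G' S ∧ S.card = k}.Nonempty := by
      refine ⟨(Finset.univ : Finset T).card, Finset.univ, ?_, rfl⟩
      intro a ha
      exact absurd (Finset.mem_univ a) ha
    obtain ⟨S', hS', hScard⟩ := Nat.sInf_mem hne
    set S : Finset V := S'.image Subtype.val ∪ {u₁, u₃} with hSdef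
    have hu1S : u₁ ∈ S := by simp [hSdef]
    have hu3S : u₃ ∈ S := by simp [hSdef]
    have hdom : IsTwoDomSet G S := by
      intro w hw
      by_cases hw2 : w = u₂
      · rw [hw2]
        have hsub : ({u₁, u₃} : Finset V) ⊆ G.neighborFinset u₂ ∩ S := by
          intro x hx
          simp only [Finset.mem_insert, Finset.mem_singleton] at hx
          rcases hx with rfl | rfl
          · exact Finset.mem_inter.2 ⟨by rw [hn2]; simp, hu1S⟩
          · exact Finset.mem_inter.2 ⟨by rw [hn2]; simp, hu3S⟩
        calc 2 = ({u₁, u₃} : Finset V).card := (Finset.card_pair h13).symm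
          _ ≤ _ := Finset.card_le_card hsub
      · have hwT : w ∈ T := by
          rw [hmemT]
          refine ⟨fun h => hw (h ▸ hu1S), hw2, fun h => hw (h ▸ hu3S)⟩
        have hwS' : (⟨w, hwT⟩ : T) ∉ S' := by
          intro h
          exact hw (Finset.mem_union_left _ (Finset.mem_image.2 ⟨_, h, rfl⟩))
        have h2 := hS' ⟨w, hwT⟩ hwS'
        refine le_trans h2 ?_
        refine Finset.card_le_card_of_injOn (fun b => (b : V)) ?_ ?_
        · intro b hb
          simp only [Finset.mem_coe, Finset.mem_inter, SimpleGraph.mem_neighborFinset] at hb ⊢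
          obtain ⟨hb1, hb2⟩ := hb
          have hadj : G.Adj w (b : V) := hb1
          exact ⟨hadj, Finset.mem_union_left _ (Finset.mem_image.2 ⟨_, hb2, rfl⟩)⟩
        · intro b₁ _ b₂ _ h; exact Subtype.ext h
    have hcard : S.card ≤ S'.card + 2 := by
      calc S.card ≤ (S'.image Subtype.val).card + ({u₁, u₃} : Finset V).card :=
            Finset.card_union_le _ _
        _ ≤ S'.card + 2 := by
            rw [Finset.card_pair h13]
            exact Nat.add_le_add_right Finset.card_image_le _
    calc gamma2 G ≤ S.card := Nat.sInf_le ⟨S, hdom, rfl⟩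
      _ ≤ S'.card + 2 := hcard
      _ = gamma2 G' + 2 := by rw [hScard]; rfl
  -- annihilation bound
  have hann : annihilation G' + 2 ≤ annihilation G := by
    have hbddG : BddAbove {k | ∃ S : Finset V, IsAnnSet G S ∧ S.card = k} := by
      refine ⟨Fintype.card V, ?_⟩
      rintro k ⟨S, _, rfl⟩
      exact Finset.card_le_univ S
    have hbdd' : BddAbove {k | ∃ S : Finset T, IsAnnSet G' S ∧ S.card = k} := by
      refine ⟨Fintype.card T, ?_⟩
      rintro k ⟨S, _, rfl⟩
      exact Finset.card_le_univ S
    have hne' : {k | ∃ S : Finset T, IsAnnSet G' S ∧ S.card = k}.Nonempty :=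
      ⟨0, ∅, by simp [IsAnnSet], rfl⟩
    obtain ⟨S', hS', hScard⟩ := Nat.sSup_mem hne' hbdd'
    have himval : ∀ x ∈ S'.image Subtype.val, x ∈ T := by
      intro x hx
      obtain ⟨a, _, rfl⟩ := Finset.mem_image.1 hx
      exact a.2
    by_cases hvS : (⟨v, hvT⟩ : T) ∈ S'
    · -- use (S' \ {v}).image val ∪ {u₁, u₂, u₃}
      obtain ⟨S, hSdef⟩ : ∃ S : Finset V,
          S = (S'.erase ⟨v, hvT⟩).image Subtype.val ∪ {u₁, u₂, u₃} := ⟨_, rfl⟩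
      have hdisj : Disjoint ((S'.erase ⟨v, hvT⟩).image Subtype.val) ({u₁, u₂, u₃} : Finset V) := by
        rw [Finset.disjoint_right]
        intro x hx hx'
        obtain ⟨a, _, rfl⟩ := Finset.mem_image.1 hx'
        obtain ⟨q1, q2, q3⟩ := (hmemT _).1 a.2
        simp only [Finset.mem_insert, Finset.mem_singleton] at hx
        rcases hx with h | h | h
        · exact q1 h
        · exact q2 h
        · exact q3 h
      have hsum : ∑ x ∈ S, G.degree x ≤ G.edgeFinset.card := by
        have himg : ∑ x ∈ (S'.erase ⟨v, hvT⟩).image Subtype.val, G.degree x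
            = ∑ a ∈ S'.erase ⟨v, hvT⟩, G.degree (a : V) :=
          Finset.sum_image (fun a _ b _ h => Subtype.ext h)
        rw [hSdef, Finset.sum_union hdisj, himg]
        have hs3 : ∑ x ∈ ({u₁, u₂, u₃} : Finset V), G.degree x = 5 := by
          rw [Finset.sum_insert (by simp [h12, h13]), Finset.sum_insert (by simp [h23]),
            Finset.sum_singleton, hd1, hd2, hd3]
          omega
        have hseq : ∑ a ∈ S'.erase ⟨v, hvT⟩, G.degree (a : V)
            = ∑ a ∈ S'.erase ⟨v, hvT⟩, G'.degree a := by
          apply Finset.sum_congr rfl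
          intro a ha
          have hav : (a : V) ≠ v := by
            intro h
            exact (Finset.ne_of_mem_erase ha) (Subtype.ext h)
          exact (hdeq a hav).symm
        have hub : ∑ a ∈ S'.erase ⟨v, hvT⟩, G'.degree a + G'.degree ⟨v, hvT⟩
            ≤ G'.edgeFinset.card := by
          rw [Finset.sum_erase_add _ _ hvS]
          exact hS'
        have hdv2 : 2 ≤ G'.degree ⟨v, hvT⟩ := by omega
        omega
      have hScard2 : S.card = S'.card + 2 := by
        rw [hSdef, Finset.card_union_of_disjoint hdisj,
          Finset.card_image_of_injective _ Subtype.val_injective,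
          Finset.card_erase_of_mem hvS]
        have h3 : ({u₁, u₂, u₃} : Finset V).card = 3 := by
          rw [Finset.card_insert_of_notMem (by simp [h12, h13]),
            Finset.card_insert_of_notMem (by simp [h23]), Finset.card_singleton]
        have hpos : 1 ≤ S'.card := Finset.card_pos.2 ⟨_, hvS⟩
        omega
      have : S.card ∈ {k | ∃ S : Finset V, IsAnnSet G S ∧ S.card = k} := ⟨S, hsum, rfl⟩
      have hle := le_csSup hbddG this
      rw [hScard2, hScard] at hle
      exact hle
    · -- use S'.image val ∪ {u₁, u₂}
      obtain ⟨S, hSdef⟩ : ∃ S : Finset V,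
          S = S'.image Subtype.val ∪ {u₁, u₂} := ⟨_, rfl⟩
      have hdisj : Disjoint (S'.image Subtype.val) ({u₁, u₂} : Finset V) := by
        rw [Finset.disjoint_right]
        intro x hx hx'
        obtain ⟨a, _, rfl⟩ := Finset.mem_image.1 hx'
        obtain ⟨q1, q2, q3⟩ := (hmemT _).1 a.2
        simp only [Finset.mem_insert, Finset.mem_singleton] at hx
        rcases hx with h | h
        · exact q1 h
        · exact q2 h
      have hsum : ∑ x ∈ S, G.degree x ≤ G.edgeFinset.card := by
        have himg : ∑ x ∈ S'.image Subtype.val, G.degree x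
            = ∑ a ∈ S', G.degree (a : V) :=
          Finset.sum_image (fun a _ b _ h => Subtype.ext h)
        rw [hSdef, Finset.sum_union hdisj, himg]
        have hs2 : ∑ x ∈ ({u₁, u₂} : Finset V), G.degree x = 3 := by
          rw [Finset.sum_insert (by simp [h12]), Finset.sum_singleton, hd1, hd2]
        have hseq : ∑ a ∈ S', G.degree (a : V) = ∑ a ∈ S', G'.degree a := by
          apply Finset.sum_congr rfl
          intro a ha
          have hav : (a : V) ≠ v := by
            intro h
            exact hvS ((Subtype.ext h : a = (⟨v, hvT⟩ : T)) ▸ ha)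
          exact (hdeq a hav).symm
        have hub : ∑ a ∈ S', G'.degree a ≤ G'.edgeFinset.card := hS'
        omega
      have hScard2 : S.card = S'.card + 2 := by
        rw [hSdef, Finset.card_union_of_disjoint hdisj,
          Finset.card_image_of_injective _ Subtype.val_injective, Finset.card_pair h12]
      have : S.card ∈ {k | ∃ S : Finset V, IsAnnSet G S ∧ S.card = k} := ⟨S, hsum, rfl⟩
      have hle := le_csSup hbddG this
      rw [hScard2, hScard] at hle
      exact hle
  exact ⟨hconn', hg2, hann, fun h => by omega⟩
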